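/- arXiv:2012.13663 — 2 statements merged into one kernel-verified Lean document; each statement's English description precedes it below -/
import Mathlib

section
/- Fix a > 0 and η > 0. The function φ(κ) = (κ/a + η) log(1 + aη/κ) − η is convex in κ on (0, ∞). -/
open Real

theorem log_age_convex (a η : ℝ) (ha : 0 < a) (hη : 0 < η) :
    ConvexOn ℝ (Set.Ioi (0:ℝ))
      (fun κ : ℝ => (κ / a + η) * Real.log (1 + a * η / κ) - η) := by
  set f : ℝ → ℝ := fun κ => (κ / a + η) * Real.log (1 + a * η / κ) - η with hfdef
  set g : ℝ → ℝ := fun κ => (1/a) * Real.log (1 + a * η / κ) - η / κ with hgdef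
  have key : ∀ x ∈ Set.Ioi (0:ℝ), HasDerivAt f (g x) x := by
    intro x hx
    simp only [Set.mem_Ioi] at hx
    have hx0 : x ≠ 0 := ne_of_gt hx
    have hpos : 0 < 1 + a * η / x := by positivity
    have h1 : HasDerivAt (fun κ : ℝ => 1 + a * η / κ) ((a*η) * (-(x^2)⁻¹)) x := by
      have := ((hasDerivAt_inv hx0).const_mul (a*η)).const_add (1:ℝ)
      simpa [div_eq_mul_inv] using this
    have h2 : HasDerivAt (fun κ : ℝ => Real.log (1 + a * η / κ))
        (((a*η) * (-(x^2)⁻¹)) / (1 + a * η / x)) x := h1.log (ne_of_gt hpos)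
    have h3 : HasDerivAt (fun κ : ℝ => κ / a + η) (1/a) x := by
      simpa using (((hasDerivAt_id x).div_const a).add_const η)
    have h4 := (h3.mul h2).sub_const η
    refine h4.congr_deriv ?_
    have hne : (1 : ℝ) + a * η / x ≠ 0 := ne_of_gt hpos
    simp only [hgdef]
    field_simp
    ring
  have keyg : ∀ x ∈ Set.Ioi (0:ℝ), HasDerivAt g (a*η^2/(x^2*(x+a*η))) x := by
    intro x hx
    simp only [Set.mem_Ioi] at hx
    have hx0 : x ≠ 0 := ne_of_gt hx
    have hpos : 0 < 1 + a * η / x := by positivity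
    have h1 : HasDerivAt (fun κ : ℝ => 1 + a * η / κ) ((a*η) * (-(x^2)⁻¹)) x := by
      have := ((hasDerivAt_inv hx0).const_mul (a*η)).const_add (1:ℝ)
      simpa [div_eq_mul_inv] using this
    have h2 : HasDerivAt (fun κ : ℝ => Real.log (1 + a * η / κ))
        (((a*η) * (-(x^2)⁻¹)) / (1 + a * η / x)) x := h1.log (ne_of_gt hpos)
    have h3 : HasDerivAt (fun κ : ℝ => η / κ) (η * (-(x^2)⁻¹)) x := by
      simpa [div_eq_mul_inv] using (hasDerivAt_inv hx0).const_mul η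
    have h4 := (h2.const_mul (1/a)).sub h3
    refine h4.congr_deriv ?_
    have hne : (1 : ℝ) + a * η / x ≠ 0 := ne_of_gt hpos
    have hxa : x + a * η ≠ 0 := by positivity
    field_simp
    ring
  have hEq : Set.EqOn (deriv f) g (Set.Ioi 0) := fun x hx => (key x hx).deriv
  have hderiv2 : ∀ x ∈ Set.Ioi (0:ℝ), deriv (deriv f) x = a*η^2/(x^2*(x+a*η)) := by
    intro x hx
    have hev : deriv f =ᶠ[nhds x] g :=
      Filter.eventuallyEq_of_mem (Ioi_mem_nhds (Set.mem_Ioi.mp hx)) hEq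
    rw [hev.deriv_eq]
    exact (keyg x hx).deriv
  have hdiff : DifferentiableOn ℝ f (Set.Ioi 0) :=
    fun x hx => ((key x hx).differentiableAt).differentiableWithinAt
  have hint : interior (Set.Ioi (0:ℝ)) = Set.Ioi 0 := interior_Ioi
  apply convexOn_of_deriv2_nonneg (convex_Ioi 0)
  · exact hdiff.continuousOn
  · rw [hint]; exact hdiff
  · rw [hint]
    intro x hx
    exact ((keyg x hx).differentiableAt.congr_of_eventuallyEq
      (Filter.eventuallyEq_of_mem (Ioi_mem_nhds (Set.mem_Ioi.mp hx)) hEq)).differentiableWithinAt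
  · rw [hint]
    intro x hx
    have hx0 : 0 < x := Set.mem_Ioi.mp hx
    simp only [Function.iterate_succ, Function.iterate_zero, Function.comp_apply, id]
    rw [hderiv2 x hx]
    positivity
end

section
/- Let C ≥ 1, η_c > 0 with ∑_c η_c = 1, p_c > 0, and ε ∈ (0, min_c η_c). Define H_c = (η_c − ε)/√((η_c² + ε²) p_c) · ∑_j √((η_j² + ε²)/p_j). Then ∑_{c=1}^C η_c/(H_c p_c) > 1. -/
open Finset Real

theorem near_optimal_thresholds_stability (C : ℕ) (hC : 1 ≤ C)
    (η p : Fin C → ℝ) (hη : ∀ c, 0 < η c) (hp : ∀ c, 0 < p c)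
    (hsum : ∑ c, η c = 1)
    (ε : ℝ) (hε : 0 < ε) (hεη : ∀ c, ε < η c)
    (H : Fin C → ℝ)
    (hH : ∀ c, H c = (η c - ε) / Real.sqrt ((η c ^ 2 + ε ^ 2) * p c) *
        (∑ j, Real.sqrt ((η j ^ 2 + ε ^ 2) / p j))) :
    (∑ c, η c / (H c * p c)) > 1 := by
  have hne : Nonempty (Fin C) := Fin.pos_iff_nonempty.mp (by omega)
  have hCne : (univ : Finset (Fin C)).Nonempty := univ_nonempty
  set S := ∑ j, Real.sqrt ((η j ^ 2 + ε ^ 2) / p j) with hS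
  have hSpos : 0 < S :=
    Finset.sum_pos (fun j _ => Real.sqrt_pos.mpr (div_pos (by positivity) (hp j))) hCne
  have key : ∀ c ∈ univ, Real.sqrt ((η c ^ 2 + ε ^ 2) / p c) / S < η c / (H c * p c) := by
    intro c _
    have hpc := hp c
    have hεc := hεη c
    have hηε : 0 < η c - ε := by linarith
    have hx : (0:ℝ) < η c ^ 2 + ε ^ 2 := by positivity
    have hsp : 0 < Real.sqrt (p c) := Real.sqrt_pos.mpr hpc
    have hsx : 0 < Real.sqrt (η c ^ 2 + ε ^ 2) := Real.sqrt_pos.mpr hx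
    have hpc2 : Real.sqrt (p c) * Real.sqrt (p c) = p c := Real.mul_self_sqrt hpc.le
    have hterm : η c / (H c * p c)
        = η c / (η c - ε) * (Real.sqrt ((η c ^ 2 + ε ^ 2) / p c) / S) := by
      rw [hH c,
        Real.sqrt_mul hx.le, Real.sqrt_div hx.le]
      field_simp
      linear_combination (η c) * hpc2
    rw [hterm]
    have hA : 0 < Real.sqrt ((η c ^ 2 + ε ^ 2) / p c) / S :=
      div_pos (Real.sqrt_pos.mpr (by positivity)) hSpos
    have hk : 1 < η c / (η c - ε) := by
      rw [lt_div_iff₀ hηε]; linarith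
    exact (lt_mul_iff_one_lt_left hA).mpr hk
  calc (1:ℝ) = ∑ c, Real.sqrt ((η c ^ 2 + ε ^ 2) / p c) / S := by
        rw [← Finset.sum_div, ← hS, div_self hSpos.ne']
    _ < ∑ c, η c / (H c * p c) := Finset.sum_lt_sum_of_nonempty hCne key
end
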